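/- If T is a tree that is not a star and has at least 4 vertices, then T contains two vertices at distance exactly 3, and the set {u,v} of two such vertices is a geodetic hull set of the complementary prism T\bar{T}. -/

import Mathlib

open SimpleGraph

/-- The geodetic closed interval `I[u,v]`: `u`, `v`, and all vertices lying on
some shortest `u`–`v` path. -/
def geoInterval {V : Type*} (G : SimpleGraph V) (u v : V) : Set V :=
  {w | w = u ∨ w = v ∨ (G.Reachable u v ∧ G.dist u w + G.dist w v = G.dist u v)}

/-- A set is geodetically convex if it is closed under intervals. -/
def IsGeoConvex {V : Type*} (G : SimpleGraph V) (S : Set V) : Prop :=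
  ∀ u ∈ S, ∀ v ∈ S, geoInterval G u v ⊆ S

/-- The geodetic convex hull: the smallest convex set containing `S`. -/
def geoHull {V : Type*} (G : SimpleGraph V) (S : Set V) : Set V :=
  ⋂₀ {T | IsGeoConvex G T ∧ S ⊆ T}

/-- `S` is a hull set if its convex hull is the whole vertex set. -/
def IsHullSet {V : Type*} (G : SimpleGraph V) (S : Set V) : Prop :=
  geoHull G S = Set.univ

/-- The geodetic hull number: minimum cardinality of a hull set. -/
noncomputable def hullNumber {V : Type*} (G : SimpleGraph V) : ℕ :=
  sInf {n | ∃ S : Set V, S.ncard = n ∧ IsHullSet G S}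

/-- A vertex is simplicial if its closed neighborhood induces a clique. -/
def IsSimplicial {V : Type*} (G : SimpleGraph V) (v : V) : Prop :=
  ∀ a ∈ G.neighborSet v, ∀ b ∈ G.neighborSet v, a ≠ b → G.Adj a b

/-- The complementary prism `G G̅`: disjoint union of `G` (left copies) and its
complement (right copies), plus a perfect matching between corresponding vertices. -/
def compPrism {V : Type*} (G : SimpleGraph V) : SimpleGraph (V ⊕ V) where
  Adj x y :=
    match x, y with
    | .inl u, .inl w => G.Adj u w
    | .inr u, .inr w => u ≠ w ∧ ¬ G.Adj u w
    | .inl u, .inr w => u = w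
    | .inr u, .inl w => u = w
  symm := ⟨by
    rintro (u | u) (w | w) h
    · exact h.symm
    · exact h.symm
    · exact h.symm
    · exact ⟨h.1.symm, fun a => h.2 a.symm⟩⟩
  loopless := ⟨by
    rintro (u | u) h
    · exact G.irrefl h
    · exact h.1 rfl⟩

section Helpers

variable {V : Type*} {T : SimpleGraph V}

private lemma isPath1 {x y : V} (h : T.Adj x y) :
    (Walk.cons h Walk.nil).IsPath := by
  simp [h.ne]

private lemma isPath2 {x m y : V} (h1 : T.Adj x m) (h2 : T.Adj m y) (hxy : x ≠ y) :
    (Walk.cons h1 (Walk.cons h2 Walk.nil)).IsPath := by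
  simp [Walk.cons_isPath_iff, h1.ne, h2.ne, hxy]

private lemma isPath3 {x m n y : V} (h1 : T.Adj x m) (h2 : T.Adj m n) (h3 : T.Adj n y)
    (hxn : x ≠ n) (hxy : x ≠ y) (hmy : m ≠ y) :
    (Walk.cons h1 (Walk.cons h2 (Walk.cons h3 Walk.nil))).IsPath := by
  simp [Walk.cons_isPath_iff, h1.ne, h2.ne, h3.ne, hxn, hxy, hmy]

private lemma paths_len (hac : T.IsAcyclic) {x y : V} {p q : T.Walk x y}
    (hp : p.IsPath) (hq : q.IsPath) (h : p.length ≠ q.length) : False := by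
  have := hac.path_unique ⟨p, hp⟩ ⟨q, hq⟩
  rw [Subtype.ext_iff] at this
  exact h (congrArg Walk.length this)

private lemma paths_supp (hac : T.IsAcyclic) {x y s : V} {p q : T.Walk x y}
    (hp : p.IsPath) (hq : q.IsPath) (h : s ∈ p.support) (h' : s ∉ q.support) : False := by
  have := hac.path_unique ⟨p, hp⟩ ⟨q, hq⟩
  have hpq : p = q := by rw [Subtype.ext_iff] at this; exact this
  exact h' (hpq ▸ h)

private lemma dist_two_mid {x y : V} (h : T.dist x y = 2) : ∃ z, T.Adj x z ∧ T.Adj z y := by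
  have hr : T.Reachable x y := by
    by_contra hr
    rw [SimpleGraph.dist_eq_zero_iff_eq_or_not_reachable.2 (Or.inr hr)] at h
    omega
  obtain ⟨p, hp⟩ := hr.exists_walk_length_eq_dist
  rw [h] at hp
  match p, hp with
  | .cons h1 (.cons h2 .nil), _ => exact ⟨_, h1, h2⟩

private lemma dist_eq_two {x y z : V} (hna : ¬ T.Adj x y) (hne : x ≠ y)
    (h1 : T.Adj x z) (h2 : T.Adj z y) : T.dist x y = 2 := by
  have hle : T.dist x y ≤ 2 := dist_le (Walk.cons h1 (Walk.cons h2 Walk.nil))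
  have h0 : T.dist x y ≠ 0 := by
    rw [Ne, SimpleGraph.Reachable.dist_eq_zero_iff (h1.reachable.trans h2.reachable)]
    exact hne
  have h1' : T.dist x y ≠ 1 := fun h => hna (dist_eq_one_iff_adj.1 h)
  omega

end Helpers

theorem tree_not_star_dist_three_hullSet {V : Type*} [Fintype V] (T : SimpleGraph V)
    (hconn : T.Connected) (hac : T.IsAcyclic) (hcard : 4 ≤ Fintype.card V)
    (hstar : ¬ ∃ c : V, ∀ v : V, v ≠ c → T.Adj c v) :
    (∃ u v : V, T.dist u v = 3) ∧
    ∀ u v : V, T.dist u v = 3 →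
      IsHullSet (compPrism T) {Sum.inl u, Sum.inl v} := by
  classical
  constructor
  · -- Part 1: existence of a pair at distance 3
    have hne : Nonempty V := Fintype.card_pos_iff.mp (by omega)
    obtain ⟨x0⟩ := hne
    obtain ⟨⟨u0, v0⟩, -, hmax⟩ := Finset.exists_max_image (Finset.univ : Finset (V × V))
      (fun p => T.dist p.1 p.2) ⟨(x0, x0), Finset.mem_univ _⟩
    have hmax' : ∀ x y : V, T.dist x y ≤ T.dist u0 v0 := fun x y =>
      hmax (x, y) (Finset.mem_univ _)
    by_cases h3 : 3 ≤ T.dist u0 v0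
    · obtain ⟨p, hp⟩ := (hconn u0 v0).exists_walk_length_eq_dist
      match p, hp with
      | .nil, hp => simp [Walk.length_nil] at hp; rw [SimpleGraph.dist_self] at h3; omega
      | .cons h1 .nil, hp => simp at hp; omega
      | .cons h1 (.cons h2 .nil), hp => simp at hp; omega
      | .cons (v := a) h1 (.cons (v := b) h2 (.cons (v := c) h3' q)), hp =>
        refine ⟨u0, c, ?_⟩
        have hle : T.dist u0 c ≤ 3 :=
          dist_le (Walk.cons h1 (Walk.cons h2 (Walk.cons h3' Walk.nil)))
        have hq : T.dist c v0 ≤ q.length := dist_le q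
        have htri : T.dist u0 v0 ≤ T.dist u0 c + T.dist c v0 := hconn.dist_triangle
        simp [Walk.length_cons] at hp
        omega
    · exfalso
      apply hstar
      push_neg at h3
      have hd2 : ∀ x y : V, T.dist x y ≤ 2 := fun x y => le_trans (hmax' x y) (by omega)
      have hpair : ∃ p q : V, T.dist p q = 2 := by
        by_contra hno
        push_neg at hno
        have hadj : ∀ x y : V, x ≠ y → T.Adj x y := by
          intro x y hxy
          have hle := hd2 x y
          have h0 : T.dist x y ≠ 0 := by
            rw [Ne, (hconn x y).dist_eq_zero_iff]; exact hxy
          have h2 := hno x y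
          exact dist_eq_one_iff_adj.1 (by omega)
        obtain ⟨x, y, hxy⟩ := Fintype.exists_pair_of_one_lt_card (α := V) (by omega)
        obtain ⟨z, hz⟩ : ∃ z : V, z ∉ ({x, y} : Finset V) := by
          by_contra hall
          push_neg at hall
          have hsub : (Finset.univ : Finset V) ⊆ {x, y} := fun a _ => hall a
          have hle := Finset.card_le_card hsub
          have h2 : ({x, y} : Finset V).card ≤ 2 := by
            simpa using Finset.card_insert_le x ({y} : Finset V)
          simp only [Finset.card_univ] at hle
          omega
        rw [Finset.mem_insert, Finset.mem_singleton] at hz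
        push_neg at hz
        exact paths_len hac (isPath1 (hadj x y hxy))
          (isPath2 (hadj x z (Ne.symm hz.1)) (hadj z y hz.2) hxy) (by simp)
      obtain ⟨p, q, hpq⟩ := hpair
      obtain ⟨c, hpc, hcq⟩ := dist_two_mid hpq
      have hnpq : ¬ T.Adj p q := fun h => by
        rw [dist_eq_one_iff_adj.2 h] at hpq; omega
      have hpqne : p ≠ q := by
        rintro rfl; rw [SimpleGraph.dist_self] at hpq; omega
      refine ⟨c, fun w hwc => ?_⟩
      by_contra hncw
      have hdcw : T.dist c w = 2 := by
        have hle := hd2 c w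
        have h0 : T.dist c w ≠ 0 := by
          rw [Ne, (hconn c w).dist_eq_zero_iff]; exact Ne.symm hwc
        have h1 : T.dist c w ≠ 1 := fun h => hncw (dist_eq_one_iff_adj.1 h)
        omega
      obtain ⟨z, hcz, hzw⟩ := dist_two_mid hdcw
      by_cases hzp : z = p
      · have hpw : T.Adj p w := hzp ▸ hzw
        have hwq : w ≠ q := fun h => hnpq (h ▸ hpw)
        by_cases hqw : T.Adj q w
        · exact paths_supp hac (s := c) (isPath2 hpc hcq hpqne) (isPath2 hpw hqw.symm hpqne)
            (by simp) (by simp [hpc.ne', Ne.symm hwc, hcq.ne])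
        · have hdqw : T.dist q w = 2 := by
            have hle := hd2 q w
            have h0 : T.dist q w ≠ 0 := by
              rw [Ne, (hconn q w).dist_eq_zero_iff]; exact Ne.symm hwq
            have h1 : T.dist q w ≠ 1 := fun h => hqw (dist_eq_one_iff_adj.1 h)
            omega
          obtain ⟨t, hqt, htw⟩ := dist_two_mid hdqw
          by_cases htc : t = c
          · exact hncw (htc ▸ htw)
          by_cases htp : t = p
          · exact hnpq (htp ▸ hqt).symm
          · exact paths_len hac (isPath2 htw.symm hqt.symm hwq)
              (isPath3 hpw.symm hpc hcq hwc hwq hpqne) (by simp)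
      · by_cases hzq : z = q
        · have hqw' : T.Adj q w := hzq ▸ hzw
          have hwp : w ≠ p := fun h => hnpq (h ▸ hqw').symm
          by_cases hpw : T.Adj p w
          · exact paths_supp hac (s := c) (isPath2 hpc hcq hpqne) (isPath2 hpw hqw'.symm hpqne)
              (by simp) (by simp [hpc.ne', Ne.symm hwc, hcq.ne])
          · have hdpw : T.dist p w = 2 := by
              have hle := hd2 p w
              have h0 : T.dist p w ≠ 0 := by
                rw [Ne, (hconn p w).dist_eq_zero_iff]; exact Ne.symm hwp
              have h1 : T.dist p w ≠ 1 := fun h => hpw (dist_eq_one_iff_adj.1 h)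
              omega
            obtain ⟨t, hpt, htw⟩ := dist_two_mid hdpw
            by_cases htc : t = c
            · exact hncw (htc ▸ htw)
            by_cases htq : t = q
            · exact hnpq (htq ▸ hpt)
            · exact paths_len hac (isPath2 htw.symm hpt.symm hwp)
                (isPath3 hqw'.symm hcq.symm hpc.symm hwc hwp
                  (Ne.symm hpqne)) (by simp)
        · by_cases hwp : w = p
          · exact paths_len hac (isPath1 hpc.symm) (isPath2 hcz (hwp ▸ hzw) hpc.ne')
              (by simp)
          by_cases hwq : w = q
          · exact paths_len hac (isPath1 hcq) (isPath2 hcz (hwq ▸ hzw) hcq.ne) (by simp)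
          by_cases hpw : T.Adj p w
          · exact paths_supp hac (s := z) (isPath2 hcz hzw (Ne.symm hwc))
              (isPath2 hpc.symm hpw (Ne.symm hwc))
              (by simp) (by simp [hcz.ne', hzp, hzw.ne])
          · have hdpw : T.dist p w = 2 := by
              have hle := hd2 p w
              have h0 : T.dist p w ≠ 0 := by
                rw [Ne, (hconn p w).dist_eq_zero_iff]
                exact fun h => hwp h.symm
              have h1 : T.dist p w ≠ 1 := fun h => hpw (dist_eq_one_iff_adj.1 h)
              omega
            obtain ⟨s', hps, hsw⟩ := dist_two_mid hdpw
            by_cases hsc : s' = c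
            · exact hncw (hsc ▸ hsw)
            · exact paths_len hac (isPath2 hps hsw (fun h => hwp h.symm))
                (isPath3 hpc hcz hzw (fun h => hzp h.symm) (fun h => hwp h.symm)
                  (fun h => hwc h.symm)) (by simp)
  · -- Part 2: the hull set property
    intro u v huv
    obtain ⟨p, hp⟩ := (hconn u v).exists_walk_length_eq_dist
    rw [huv] at hp
    match p, hp with
    | .nil, hp => simp at hp
    | .cons h1 .nil, hp => simp at hp
    | .cons h1 (.cons h2 .nil), hp => simp at hp
    | .cons h1 (.cons h2 (.cons h3 (.cons h4 q))), hp => simp [Walk.length_cons] at hp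
    | .cons (v := a) h1 (.cons (v := b) h2 (.cons h3 .nil)), hp =>
    clear hp
    have hnuv : ¬ T.Adj u v := fun h => by
      have : T.dist u v ≤ 1 := dist_le (Walk.cons h Walk.nil); omega
    have hnav : ¬ T.Adj a v := fun h => by
      have : T.dist u v ≤ 2 := dist_le (Walk.cons h1 (Walk.cons h Walk.nil)); omega
    have hnub : ¬ T.Adj u b := fun h => by
      have : T.dist u v ≤ 2 := dist_le (Walk.cons h (Walk.cons h3 Walk.nil)); omega
    have huv' : u ≠ v := by rintro rfl; rw [SimpleGraph.dist_self] at huv; omega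
    have hav : a ≠ v := fun h => hnuv (h ▸ h1)
    have hub : u ≠ b := fun h => hnuv (by rw [h]; exact h3)
    -- connectivity of the prism
    have hGconn : (compPrism T).Connected := by
      have l : ∀ w : V, (compPrism T).Reachable (Sum.inl w) (Sum.inl u) := fun w =>
        Reachable.map ⟨Sum.inl, fun h => h⟩ (hconn w u)
      have r : ∀ w : V, (compPrism T).Reachable (Sum.inr w) (Sum.inl w) := fun w =>
        (show (compPrism T).Adj (Sum.inr w) (Sum.inl w) from rfl).reachable
      rw [connected_iff]
      refine ⟨?_, ⟨Sum.inl u⟩⟩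
      rintro (w | w) (z | z)
      · exact (l w).trans (l z).symm
      · exact (l w).trans ((r z).trans (l z)).symm
      · exact ((r w).trans (l w)).trans (l z).symm
      · exact ((r w).trans (l w)).trans ((r z).trans (l z)).symm
    have mem_int : ∀ x y w : V ⊕ V,
        (compPrism T).dist x w + (compPrism T).dist w y = (compPrism T).dist x y →
        w ∈ geoInterval (compPrism T) x y := fun x y w h =>
      Or.inr (Or.inr ⟨hGconn.preconnected x y, h⟩)
    -- distance facts in the prism
    have hd3 : (compPrism T).dist (Sum.inl u) (Sum.inl v) = 3 := by
      have hle : (compPrism T).dist (Sum.inl u) (Sum.inl v) ≤ 3 :=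
        dist_le (Walk.cons (show (compPrism T).Adj (Sum.inl u) (Sum.inl a) from h1)
          (Walk.cons (show (compPrism T).Adj (Sum.inl a) (Sum.inl b) from h2)
            (Walk.cons (show (compPrism T).Adj (Sum.inl b) (Sum.inl v) from h3) Walk.nil)))
      have h0 : (compPrism T).dist (Sum.inl u) (Sum.inl v) ≠ 0 := by
        rw [Ne, (hGconn.preconnected (Sum.inl u) (Sum.inl v)).dist_eq_zero_iff]
        simp [huv']
      have h1' : (compPrism T).dist (Sum.inl u) (Sum.inl v) ≠ 1 := fun h =>
        hnuv ((dist_eq_one_iff_adj (G := compPrism T)).1 h)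
      have h2' : (compPrism T).dist (Sum.inl u) (Sum.inl v) ≠ 2 := by
        intro h
        obtain ⟨z, hz1, hz2⟩ := dist_two_mid h
        rcases z with w | w
        · have : T.dist u v ≤ 2 :=
            dist_le (Walk.cons (show T.Adj u w from hz1) (Walk.cons (show T.Adj w v from hz2) Walk.nil))
          omega
        · exact huv' ((show u = w from hz1).trans (show w = v from hz2))
      omega
    have d_lu_ru : (compPrism T).dist (Sum.inl u) (Sum.inr u) = 1 :=
      dist_eq_one_iff_adj.2 rfl
    have d_ru_lv : (compPrism T).dist (Sum.inr u) (Sum.inl v) = 2 :=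
      dist_eq_two (z := Sum.inr v) (fun h => huv' h) (by simp)
        (show u ≠ v ∧ ¬ T.Adj u v from ⟨huv', hnuv⟩) rfl
    have d_lu_rv : (compPrism T).dist (Sum.inl u) (Sum.inr v) = 2 :=
      dist_eq_two (z := Sum.inr u) (fun h => huv' h) (by simp [huv'])
        rfl (show u ≠ v ∧ ¬ T.Adj u v from ⟨huv', hnuv⟩)
    have d_rv_lv : (compPrism T).dist (Sum.inr v) (Sum.inl v) = 1 :=
      dist_eq_one_iff_adj.2 rfl
    have d_lu_la : (compPrism T).dist (Sum.inl u) (Sum.inl a) = 1 :=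
      dist_eq_one_iff_adj.2 h1
    have d_la_lv : (compPrism T).dist (Sum.inl a) (Sum.inl v) = 2 :=
      dist_eq_two (z := Sum.inl b) (fun h => hnav h) (by simp [hav]) h2 h3
    have d_lu_lb : (compPrism T).dist (Sum.inl u) (Sum.inl b) = 2 :=
      dist_eq_two (z := Sum.inl a) (fun h => hnub h) (by simp [hub]) h1 h2
    have d_lb_lv : (compPrism T).dist (Sum.inl b) (Sum.inl v) = 1 :=
      dist_eq_one_iff_adj.2 h3
    have d_la_rv : (compPrism T).dist (Sum.inl a) (Sum.inr v) = 2 :=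
      dist_eq_two (z := Sum.inr a) (fun h => hav h) (by simp)
        rfl (show a ≠ v ∧ ¬ T.Adj a v from ⟨hav, hnav⟩)
    have d_la_ra : (compPrism T).dist (Sum.inl a) (Sum.inr a) = 1 :=
      dist_eq_one_iff_adj.2 rfl
    have d_ra_rv : (compPrism T).dist (Sum.inr a) (Sum.inr v) = 1 :=
      dist_eq_one_iff_adj.2 (show a ≠ v ∧ ¬ T.Adj a v from ⟨hav, hnav⟩)
    have d_lb_ru : (compPrism T).dist (Sum.inl b) (Sum.inr u) = 2 :=
      dist_eq_two (z := Sum.inr b) (fun h => hub h.symm) (by simp)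
        rfl (show b ≠ u ∧ ¬ T.Adj b u from ⟨Ne.symm hub, fun h => hnub h.symm⟩)
    have d_lb_rb : (compPrism T).dist (Sum.inl b) (Sum.inr b) = 1 :=
      dist_eq_one_iff_adj.2 rfl
    have d_rb_ru : (compPrism T).dist (Sum.inr b) (Sum.inr u) = 1 :=
      dist_eq_one_iff_adj.2 (show b ≠ u ∧ ¬ T.Adj b u from ⟨Ne.symm hub, fun h => hnub h.symm⟩)
    -- the hull computation
    rw [IsHullSet, Set.eq_univ_iff_forall]
    intro x
    refine Set.mem_sInter.2 ?_
    rintro S ⟨hSc, hSs⟩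
    have hSu : Sum.inl u ∈ S := hSs (by simp)
    have hSv : Sum.inl v ∈ S := hSs (by simp)
    have h_ru : Sum.inr u ∈ S :=
      hSc _ hSu _ hSv (mem_int _ _ _ (by rw [d_lu_ru, d_ru_lv, hd3]))
    have h_rv : Sum.inr v ∈ S :=
      hSc _ hSu _ hSv (mem_int _ _ _ (by rw [d_lu_rv, d_rv_lv, hd3]))
    have h_la : Sum.inl a ∈ S :=
      hSc _ hSu _ hSv (mem_int _ _ _ (by rw [d_lu_la, d_la_lv, hd3]))
    have h_lb : Sum.inl b ∈ S :=
      hSc _ hSu _ hSv (mem_int _ _ _ (by rw [d_lu_lb, d_lb_lv, hd3]))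
    have h_ra : Sum.inr a ∈ S :=
      hSc _ h_la _ h_rv (mem_int _ _ _ (by rw [d_la_ra, d_ra_rv, d_la_rv]))
    have h_rb : Sum.inr b ∈ S :=
      hSc _ h_lb _ h_ru (mem_int _ _ _ (by rw [d_lb_rb, d_rb_ru, d_lb_ru]))
    have hR : ∀ w : V, Sum.inr w ∈ S := by
      intro w
      by_cases hwu : w = u
      · exact hwu ▸ h_ru
      by_cases hwa : w = a
      · exact hwa ▸ h_ra
      by_cases hwb : w = b
      · exact hwb ▸ h_rb
      by_cases hwv : w = v
      · exact hwv ▸ h_rv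
      have key : ∀ x y : V, T.Adj x y → ¬ T.Adj w x → ¬ T.Adj w y → w ≠ x → w ≠ y →
          Sum.inr x ∈ S → Sum.inr y ∈ S → Sum.inr w ∈ S := by
        intro x y hxy hwx hwy hne1 hne2 hx hy
        have e1 : (compPrism T).dist (Sum.inr x) (Sum.inr w) = 1 :=
          dist_eq_one_iff_adj.2
            (show x ≠ w ∧ ¬ T.Adj x w from ⟨Ne.symm hne1, fun h => hwx h.symm⟩)
        have e2 : (compPrism T).dist (Sum.inr w) (Sum.inr y) = 1 :=
          dist_eq_one_iff_adj.2 (show w ≠ y ∧ ¬ T.Adj w y from ⟨hne2, hwy⟩)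
        have exy : (compPrism T).dist (Sum.inr x) (Sum.inr y) = 2 :=
          dist_eq_two (z := Sum.inr w)
            (fun h => (show x ≠ y ∧ ¬ T.Adj x y from h).2 hxy) (by simp [hxy.ne])
            (show x ≠ w ∧ ¬ T.Adj x w from ⟨Ne.symm hne1, fun h => hwx h.symm⟩)
            (show w ≠ y ∧ ¬ T.Adj w y from ⟨hne2, hwy⟩)
        exact hSc _ hx _ hy (mem_int _ _ _ (by rw [e1, e2, exy]))
      by_cases c1 : ¬ T.Adj w u ∧ ¬ T.Adj w a
      · exact key u a h1 c1.1 c1.2 hwu hwa h_ru h_ra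
      by_cases c2 : ¬ T.Adj w a ∧ ¬ T.Adj w b
      · exact key a b h2 c2.1 c2.2 hwa hwb h_ra h_rb
      by_cases c3 : ¬ T.Adj w b ∧ ¬ T.Adj w v
      · exact key b v h3 c3.1 c3.2 hwb hwv h_rb h_rv
      exfalso
      rw [not_and_or, not_not, not_not] at c1 c2 c3
      rcases c1 with hA | hB
      · rcases c2 with hC | hD
        · exact paths_len hac (isPath1 h1) (isPath2 hA.symm hC h1.ne) (by simp)
        · exact paths_supp hac (s := a) (isPath2 h1 h2 hub) (isPath2 hA.symm hD hub)
            (by simp) (by simp [h1.ne', Ne.symm hwa, h2.ne])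
      · rcases c3 with hE | hF
        · exact paths_len hac (isPath1 h2) (isPath2 hB.symm hE h2.ne) (by simp)
        · exact paths_supp hac (s := b) (isPath2 h2 h3 hav) (isPath2 hB.symm hF hav)
            (by simp) (by simp [h2.ne', Ne.symm hwb, h3.ne])
    have step : ∀ x y : V, T.Adj x y → Sum.inl x ∈ S → Sum.inl y ∈ S := by
      intro x y hxy hx
      have e1 : (compPrism T).dist (Sum.inl x) (Sum.inl y) = 1 := dist_eq_one_iff_adj.2 hxy
      have e2 : (compPrism T).dist (Sum.inl y) (Sum.inr y) = 1 := dist_eq_one_iff_adj.2 rfl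
      have exy : (compPrism T).dist (Sum.inl x) (Sum.inr y) = 2 :=
        dist_eq_two (z := Sum.inl y) (fun h => hxy.ne h) (by simp) hxy rfl
      exact hSc _ hx _ (hR y) (mem_int _ _ _ (by rw [e1, e2, exy]))
    have aux : ∀ (x y : V), T.Walk x y → Sum.inl x ∈ S → Sum.inl y ∈ S := by
      intro x y q
      induction q with
      | nil => exact id
      | cons h q ih => exact fun hx => ih (step _ _ h hx)
    have hL : ∀ w : V, Sum.inl w ∈ S := fun w =>
      (hconn u w).elim (fun q => aux u w q hSu)
    rcases x with w | w
    · exact hL w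
    · exact hR w
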